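/- Intertwining identity for the subextremal (Whiting) integral-transform kernel: Fix reals r₋ < r₊ and parameters s ∈ ℝ, ξ, η, γ, L ∈ ℂ, and set A := −2γ/(r₊ − r₋). Then for all x, r ∈ ℝ, the kernel K(x, r) := exp(A(x−r₋)(r−r₋)) satisfies 𝒯̃_x K(x, r) = 𝒯_r K(x, r), where 𝒯̃_x acts on K as a function of x (with r fixed) and 𝒯_r acts on K as a function of r (with x fixed). -/
import Mathlib


open Real Complex Filter Set MeasureTheory

noncomputable section

/-- The confluent Heun operator
`𝒯_r = (r−r₊)(r−r₋) d²/dr² + [(2η+1−s)(r−r₊) + (2ξ+1−s)(r−r₋) + 2γ(r−r₊)(r−r₋)] d/dr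
  + 2γ(1−2s)(r−r₋) + 2γ(1−s)r₋ − 2s − L`. -/
def CHeun (rp rm s : ℝ) (ξ η γ L : ℂ) (f : ℝ → ℂ) (r : ℝ) : ℂ :=
  ((r : ℂ) - (rp : ℂ)) * ((r : ℂ) - (rm : ℂ)) * deriv (deriv f) r
    + ((2 * η + 1 - (s : ℂ)) * ((r : ℂ) - (rp : ℂ))
        + (2 * ξ + 1 - (s : ℂ)) * ((r : ℂ) - (rm : ℂ))
        + 2 * γ * ((r : ℂ) - (rp : ℂ)) * ((r : ℂ) - (rm : ℂ))) * deriv f r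
    + (2 * γ * (1 - 2 * (s : ℂ)) * ((r : ℂ) - (rm : ℂ)) + 2 * γ * (1 - (s : ℂ)) * (rm : ℂ)
        - 2 * (s : ℂ) - L) * f r

/-- The transformed confluent Heun operator
`𝒯̃_x = (x−r₊)(x−r₋) d²/dx² + [(1−2s)(x−r₊) + (1+2ξ+2η)(x−r₋) + 2γ(x−r₊)(x−r₋)] d/dx
  + 2γ(2η+1−s)(x−r₋) + 2γ(1−s)r₋ − 2s − L`. -/
def CtildeHeun (rp rm s : ℝ) (ξ η γ L : ℂ) (f : ℝ → ℂ) (x : ℝ) : ℂ :=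
  ((x : ℂ) - (rp : ℂ)) * ((x : ℂ) - (rm : ℂ)) * deriv (deriv f) x
    + ((1 - 2 * (s : ℂ)) * ((x : ℂ) - (rp : ℂ))
        + (1 + 2 * ξ + 2 * η) * ((x : ℂ) - (rm : ℂ))
        + 2 * γ * ((x : ℂ) - (rp : ℂ)) * ((x : ℂ) - (rm : ℂ))) * deriv f x
    + (2 * γ * (2 * η + 1 - (s : ℂ)) * ((x : ℂ) - (rm : ℂ)) + 2 * γ * (1 - (s : ℂ)) * (rm : ℂ)
        - 2 * (s : ℂ) - L) * f x

lemma hasDerivAt_cexp_affine (c d : ℂ) (t : ℝ) :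
    HasDerivAt (fun t : ℝ => Complex.exp (c * t + d)) (c * Complex.exp (c * t + d)) t := by
  have h1 : HasDerivAt (fun t : ℝ => c * (t : ℂ) + d) c t := by
    simpa using ((Complex.ofRealCLM.hasDerivAt (x := t)).const_mul c).add_const d
  simpa [mul_comm] using h1.cexp

lemma deriv_cexp_affine (c d : ℂ) :
    deriv (fun t : ℝ => Complex.exp (c * t + d)) = fun t : ℝ => c * Complex.exp (c * t + d) := by
  funext t; exact (hasDerivAt_cexp_affine c d t).deriv

lemma deriv_const_mul_cexp_affine (a c d : ℂ) :
    deriv (fun t : ℝ => a * Complex.exp (c * t + d))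
      = fun t : ℝ => a * c * Complex.exp (c * t + d) := by
  funext t
  simpa [mul_assoc, mul_comm, mul_left_comm] using ((hasDerivAt_cexp_affine c d t).const_mul a).deriv

lemma deriv2_cexp_affine (c d : ℂ) :
    deriv (deriv (fun t : ℝ => Complex.exp (c * t + d)))
      = fun t : ℝ => c * c * Complex.exp (c * t + d) := by
  rw [deriv_cexp_affine]
  funext t
  simpa [mul_assoc] using ((hasDerivAt_cexp_affine c d t).const_mul c).deriv

/-- **Intertwining identity for the subextremal (Whiting) integral-transform kernel**:
with `A = −2γ/(r₊ − r₋)`, the kernel `K(x, r) = exp(A(x−r₋)(r−r₋))` satisfies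
`𝒯̃_x K(x, r) = 𝒯_r K(x, r)` for all real `x`, `r`. -/
theorem kernel_intertwining_subextremal
    (rm rp : ℝ) (hr : rm < rp) (s : ℝ) (ξ η γ L : ℂ) :
    ∀ x r : ℝ,
      CtildeHeun rp rm s ξ η γ L
          (fun x' : ℝ => Complex.exp
            (-2 * γ / ((rp : ℂ) - (rm : ℂ)) * ((x' : ℂ) - (rm : ℂ)) * ((r : ℂ) - (rm : ℂ)))) x
        = CHeun rp rm s ξ η γ L
            (fun r' : ℝ => Complex.exp
              (-2 * γ / ((rp : ℂ) - (rm : ℂ)) * ((x : ℂ) - (rm : ℂ)) * ((r' : ℂ) - (rm : ℂ)))) r := by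
  intro x r
  have hne : (rp : ℂ) - (rm : ℂ) ≠ 0 := by
    rw [sub_ne_zero]
    exact_mod_cast hr.ne'
  set A : ℂ := -2 * γ / ((rp : ℂ) - (rm : ℂ)) with hA
  have hK1 : (fun x' : ℝ => Complex.exp (A * ((x' : ℂ) - (rm : ℂ)) * ((r : ℂ) - (rm : ℂ))))
      = fun x' : ℝ => Complex.exp ((A * ((r : ℂ) - rm)) * (x' : ℂ) + (-(A * ((r : ℂ) - rm)) * rm)) := by
    funext t; exact congrArg Complex.exp (by ring)
  have hK2 : (fun r' : ℝ => Complex.exp (A * ((x : ℂ) - (rm : ℂ)) * ((r' : ℂ) - (rm : ℂ))))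
      = fun r' : ℝ => Complex.exp ((A * ((x : ℂ) - rm)) * (r' : ℂ) + (-(A * ((x : ℂ) - rm)) * rm)) := by
    funext t; exact congrArg Complex.exp (by ring)
  simp only [CtildeHeun, CHeun, hK1, hK2, deriv_cexp_affine, deriv_const_mul_cexp_affine,
    deriv2_cexp_affine]
  have harg : Complex.exp ((A * ((x : ℂ) - rm)) * (r : ℂ) + (-(A * ((x : ℂ) - rm)) * rm))
      = Complex.exp ((A * ((r : ℂ) - rm)) * (x : ℂ) + (-(A * ((r : ℂ) - rm)) * rm)) :=
    congrArg Complex.exp (by ring)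
  have harg2 : Complex.exp (A * ((x : ℂ) - rm) * ((r : ℂ) - rm))
      = Complex.exp ((A * ((r : ℂ) - rm)) * (x : ℂ) + (-(A * ((r : ℂ) - rm)) * rm)) :=
    congrArg Complex.exp (by ring)
  rw [harg, harg2]
  set E := Complex.exp ((A * ((r : ℂ) - rm)) * (x : ℂ) + (-(A * ((r : ℂ) - rm)) * rm))
  have hγ : γ = -(A * ((rp : ℂ) - rm)) / 2 := by
    rw [hA]; field_simp
  clear_value A
  rw [hγ]
  ring
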